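/- Let λ = (λ_1 ≥ λ_2 ≥ … ≥ λ_r > 0) be a partition with conjugate partition λ′, and let k = #{j : λ_j ≥ j} be the size of its Durfee square. Then, as integers, Σ_{j=1}^{r} [(λ_j − j)(λ_j − j + 1)(2λ_j − 2j + 1) + j(j − 1)(2j − 1)] = Σ_{j=1}^{k} [(λ_j − j)(λ_j − j + 1)(2(λ_j − j) + 1) + (λ′_j − j)(λ′_j − j + 1)(2(λ′_j − j) + 1)]. (In Frobenius coordinates λ = (α_1,…,α_k | β_1,…,β_k) with α_j = λ_j − j and β_j = λ′_j − j, the common value is Σ_{j=1}^k [α_j(α_j+1)(2α_j+1) + β_j(β_j+1)(2β_j+1)].) -/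

import Mathlib

/-- The `j`-th part (1-indexed) of a partition given as a list of parts in decreasing
order, padded with zeros beyond the end. -/
def part (l : List ℕ) (j : ℕ) : ℕ := l.getD (j - 1) 0

/-- The `j`-th part (1-indexed) of the conjugate partition: `λ′_j = #{m : λ_m ≥ j}`. -/
def conjPart (l : List ℕ) (j : ℕ) : ℕ := (l.filter (fun x => j ≤ x)).length

/-- The size of the Durfee square of a partition: `#{j : λ_j ≥ j}`. -/
def durfee (l : List ℕ) : ℕ :=
  ((Finset.Icc 1 l.length).filter (fun j => j ≤ part l j)).card


lemma sq_sum_eq (n : ℕ) :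
    (n:ℤ) * ((n:ℤ)+1) * (2*(n:ℤ)+1) = 6 * ∑ i ∈ Finset.Icc 1 n, (i:ℤ)^2 := by
  induction n with
  | zero => simp
  | succ n ih =>
    rw [Finset.sum_Icc_succ_top (by omega)]
    push_cast at ih ⊢
    linear_combination ih

lemma lhs_term (P j : ℕ) :
    ((P:ℤ) - j) * ((P:ℤ) - j + 1) * (2*(P:ℤ) - 2*(j:ℤ) + 1)
      + (j:ℤ) * ((j:ℤ) - 1) * (2*(j:ℤ) - 1)
      = 6 * ∑ m ∈ Finset.Icc 1 P, ((m:ℤ) - j)^2 := by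
  induction P with
  | zero => simp; ring
  | succ P ih =>
    rw [Finset.sum_Icc_succ_top (by omega)]
    push_cast at ih ⊢
    linear_combination ih

lemma sum_Ioc_sq (a P : ℕ) :
    ∑ m ∈ Finset.Ioc a P, ((m:ℤ) - a)^2 = ∑ i ∈ Finset.Icc 1 (P - a), (i:ℤ)^2 := by
  rcases le_or_gt P a with h | h
  · rw [Finset.Ioc_eq_empty (by omega), Nat.sub_eq_zero_of_le h]; simp
  · have hmap : Finset.Ioc a P = (Finset.Ioc 0 (P - a)).map (addRightEmbedding a) := by
      rw [Finset.map_add_right_Ioc]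
      congr 1 <;> omega
    rw [hmap, Finset.sum_map]
    rw [show Finset.Icc 1 (P - a) = Finset.Ioc 0 (P - a) by rw [← Finset.Icc_add_one_left_eq_Ioc]; rfl]
    apply Finset.sum_congr rfl
    intro i _
    simp [addRightEmbedding]

lemma sum_Icc_sq (a P : ℕ) :
    ∑ m ∈ Finset.Icc a P, ((m:ℤ) - a)^2 = ∑ i ∈ Finset.Icc 1 (P - a), (i:ℤ)^2 := by
  rcases le_or_gt a P with h | h
  · rw [← Finset.Ioc_insert_left h, Finset.sum_insert (by simp), ← sum_Ioc_sq]
    simp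
  · rw [Finset.Icc_eq_empty (by omega), Nat.sub_eq_zero_of_le (by omega)]; simp



lemma sorted_getElem_le {l : List ℕ} (hs : l.Pairwise (· ≥ ·)) {i j : ℕ}
    (hij : i ≤ j) (hj : j < l.length) : l[j] ≤ l[i]'(by omega) := by
  rcases eq_or_lt_of_le hij with rfl | hlt
  · exact le_refl _
  · exact List.pairwise_iff_getElem.mp hs i j (by omega) hj hlt

lemma le_length_of_part {l : List ℕ} {j : ℕ} (h : 1 ≤ part l j) : j ≤ l.length := by
  by_contra hc
  push_neg at hc
  rw [part, List.getD_eq_default _ _ (by omega)] at h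
  omega

lemma part_eq_getElem {l : List ℕ} {j : ℕ} (hj : 1 ≤ j) (hjl : j ≤ l.length) :
    part l j = l[j-1]'(by omega) := by
  rw [part, List.getD_eq_getElem _ _ (by omega)]

lemma part_anti {l : List ℕ} (hs : l.Pairwise (· ≥ ·)) {i j : ℕ} (hi : 1 ≤ i)
    (hij : i ≤ j) : part l j ≤ part l i := by
  rcases le_or_gt j l.length with hj | hj
  · rw [part_eq_getElem hi (by omega), part_eq_getElem (by omega) hj]
    exact sorted_getElem_le hs (by omega) (by omega)
  · rw [part, List.getD_eq_default _ _ (by omega)]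
    exact Nat.zero_le _

lemma conjPart_le_length (l : List ℕ) (m : ℕ) : conjPart l m ≤ l.length :=
  List.length_filter_le _ _

lemma conj_iff {l : List ℕ} (hs : l.Pairwise (· ≥ ·)) {j m : ℕ} (hj : 1 ≤ j)
    (hm : 1 ≤ m) : j ≤ conjPart l m ↔ m ≤ part l j := by
  rw [conjPart, ← List.countP_eq_length_filter]
  constructor
  · intro h
    have hjl : j ≤ l.length := le_trans h (List.countP_le_length)
    by_contra hc
    push_neg at hc
    rw [part_eq_getElem hj hjl] at hc
    -- all elements ≥ m are among the first j-1
    have hsplit : l = l.take (j-1) ++ l.drop (j-1) := (List.take_append_drop _ _).symm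
    have hcount : List.countP (fun x => decide (m ≤ x)) l
        = List.countP (fun x => decide (m ≤ x)) (l.take (j-1))
          + List.countP (fun x => decide (m ≤ x)) (l.drop (j-1)) := by
      conv_lhs => rw [hsplit]
      exact List.countP_append
    have hdrop : List.countP (fun x => decide (m ≤ x)) (l.drop (j-1)) = 0 := by
      rw [List.countP_eq_zero]
      intro a ha
      obtain ⟨i, hi, rfl⟩ := List.mem_iff_getElem.mp ha
      rw [List.getElem_drop]
      have hle : l[j-1+i]'(by simp at hi; omega) ≤ l[j-1]'(by omega) :=
        sorted_getElem_le hs (by omega) (by simp at hi; omega)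
      simp only [decide_eq_true_eq]
      omega
    have htake : List.countP (fun x => decide (m ≤ x)) (l.take (j-1)) ≤ j - 1 := by
      calc List.countP (fun x => decide (m ≤ x)) (l.take (j-1))
          ≤ (l.take (j-1)).length := List.countP_le_length
        _ ≤ j - 1 := by simp
    omega
  · intro h
    have hjl : j ≤ l.length := le_length_of_part (le_trans hm h)
    rw [part_eq_getElem hj hjl] at h
    have h1 : List.countP (fun x => decide (m ≤ x)) (l.take j) = j := by
      have hlen : (l.take j).length = j := by simp; omega
      have hall : ∀ a ∈ l.take j, (fun x => decide (m ≤ x)) a = true := by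
        intro a ha
        obtain ⟨i, hi, rfl⟩ := List.mem_iff_getElem.mp ha
        rw [List.getElem_take]
        have : l[j-1]'(by omega) ≤ l[i]'(by simp at hi; omega) :=
          sorted_getElem_le hs (by simp at hi; omega) (by omega)
        simp only [decide_eq_true_eq]
        omega
      rw [List.countP_eq_length.mpr hall, hlen]
    calc j = List.countP (fun x => decide (m ≤ x)) (l.take j) := h1.symm
      _ ≤ List.countP (fun x => decide (m ≤ x)) l :=
          (List.take_sublist _ _).countP_le

lemma le_durfee_iff {l : List ℕ} (hs : l.Pairwise (· ≥ ·)) {j : ℕ} (hj : 1 ≤ j) :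
    j ≤ durfee l ↔ j ≤ part l j := by
  set S := (Finset.Icc 1 l.length).filter (fun j => j ≤ part l j) with hS
  have hmemS : ∀ x, x ∈ S ↔ (1 ≤ x ∧ x ≤ l.length ∧ x ≤ part l x) := by
    intro x
    simp [hS, Finset.mem_filter, Finset.mem_Icc]
    tauto
  have hmem_of : ∀ x, 1 ≤ x → x ≤ part l x → x ∈ S := by
    intro x hx hxp
    exact (hmemS x).mpr ⟨hx, le_length_of_part (le_trans hx hxp), hxp⟩
  rcases Finset.eq_empty_or_nonempty S with he | hne
  · have hd : durfee l = 0 := by rw [durfee, ← hS, he]; simp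
    rw [hd]
    constructor
    · omega
    · intro h
      exact absurd (hmem_of j hj h) (by simp [he])
  · set M := S.max' hne with hM
    have hMS : M ∈ S := S.max'_mem hne
    obtain ⟨hM1, hMl, hMp⟩ := (hmemS M).mp hMS
    have hSeq : S = Finset.Icc 1 M := by
      apply Finset.ext
      intro x
      rw [hmemS, Finset.mem_Icc]
      constructor
      · intro ⟨h1, h2, h3⟩
        exact ⟨h1, Finset.le_max' S x ((hmemS x).mpr ⟨h1, h2, h3⟩)⟩
      · intro ⟨h1, h2⟩
        have : part l M ≤ part l x := part_anti hs h1 h2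
        exact ⟨h1, by omega, by omega⟩
    have hd : durfee l = M := by rw [durfee, ← hS, hSeq, Nat.card_Icc]; omega
    rw [hd]
    constructor
    · intro h
      have hjS := (hmemS j).mp (by rw [hSeq, Finset.mem_Icc]; exact ⟨hj, h⟩)
      exact hjS.2.2
    · intro h
      exact Finset.le_max' S j (hmem_of j hj h)

lemma durfee_le_length (l : List ℕ) : durfee l ≤ l.length := by
  calc durfee l ≤ (Finset.Icc 1 l.length).card := Finset.card_filter_le _ _
    _ = l.length := by rw [Nat.card_Icc]; omega

lemma core (l : List ℕ) (hs : l.Pairwise (· ≥ ·)) :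
    ∑ j ∈ Finset.Icc 1 l.length, ∑ m ∈ Finset.Icc 1 (part l j), ((m:ℤ) - j)^2
      = ∑ j ∈ Finset.Icc 1 (durfee l),
          ((∑ i ∈ Finset.Icc 1 (part l j - j), (i:ℤ)^2)
            + ∑ i ∈ Finset.Icc 1 (conjPart l j - j), (i:ℤ)^2) := by
  set r := l.length with hr
  set k := durfee l with hkdef
  have hk : k ≤ r := durfee_le_length l
  have hsplit : ∀ j ∈ Finset.Icc 1 r,
      ∑ m ∈ Finset.Icc 1 (part l j), ((m:ℤ) - j)^2
        = (∑ m ∈ (Finset.Icc 1 r).filter (fun m => m ≤ j ∧ m ≤ part l j),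
            ((m:ℤ) - j)^2)
          + ∑ m ∈ Finset.Ioc j (part l j), ((m:ℤ) - j)^2 := by
    intro j hj
    rw [Finset.mem_Icc] at hj
    rw [← Finset.sum_union ?_]
    · congr 1
      apply Finset.ext
      intro m
      simp only [Finset.mem_union, Finset.mem_filter, Finset.mem_Icc, Finset.mem_Ioc]
      constructor
      · intro ⟨h1, h2⟩
        rcases le_or_gt m j with h | h
        · exact Or.inl ⟨⟨h1, by omega⟩, h, h2⟩
        · exact Or.inr ⟨h, h2⟩
      · intro h
        rcases h with ⟨⟨h1, h2⟩, h3, h4⟩ | ⟨h3, h4⟩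
        · exact ⟨h1, h4⟩
        · exact ⟨by omega, h4⟩
    · rw [Finset.disjoint_left]
      intro m hm1 hm2
      simp only [Finset.mem_filter, Finset.mem_Icc] at hm1
      simp only [Finset.mem_Ioc] at hm2
      omega
  rw [Finset.sum_congr rfl hsplit, Finset.sum_add_distrib]
  have harm : ∑ j ∈ Finset.Icc 1 r, ∑ m ∈ Finset.Ioc j (part l j), ((m:ℤ) - j)^2
      = ∑ j ∈ Finset.Icc 1 k, ∑ i ∈ Finset.Icc 1 (part l j - j), (i:ℤ)^2 := by
    rw [Finset.sum_congr rfl (fun j _ => sum_Ioc_sq j (part l j))]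
    symm
    apply Finset.sum_subset (Finset.Icc_subset_Icc_right hk)
    intro j hj hjk
    rw [Finset.mem_Icc] at hj hjk
    have hnot : ¬ j ≤ part l j := by
      intro hc
      exact absurd ((le_durfee_iff hs hj.1).mpr hc) (by omega)
    rw [show part l j - j = 0 by omega]
    simp
  have hleg : ∑ j ∈ Finset.Icc 1 r,
      ∑ m ∈ (Finset.Icc 1 r).filter (fun m => m ≤ j ∧ m ≤ part l j), ((m:ℤ) - j)^2
      = ∑ m ∈ Finset.Icc 1 k, ∑ i ∈ Finset.Icc 1 (conjPart l m - m), (i:ℤ)^2 := by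
    simp_rw [Finset.sum_filter]
    rw [Finset.sum_comm]
    have hper : ∀ m ∈ Finset.Icc 1 r,
        (∑ j ∈ Finset.Icc 1 r, if m ≤ j ∧ m ≤ part l j then ((m:ℤ) - j)^2 else 0)
          = ∑ i ∈ Finset.Icc 1 (conjPart l m - m), (i:ℤ)^2 := by
      intro m hm
      rw [Finset.mem_Icc] at hm
      have hstep : ∀ j ∈ Finset.Icc 1 r,
          (if m ≤ j ∧ m ≤ part l j then ((m:ℤ) - j)^2 else 0)
            = (if m ≤ j ∧ j ≤ conjPart l m then ((j:ℤ) - m)^2 else 0) := by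
        intro j hj
        rw [Finset.mem_Icc] at hj
        have hiff : (m ≤ j ∧ m ≤ part l j) ↔ (m ≤ j ∧ j ≤ conjPart l m) := by
          rw [conj_iff hs hj.1 hm.1]
        have hv : ((m:ℤ) - j)^2 = ((j:ℤ) - m)^2 := by ring
        rw [hv]
        simp only [hiff]
      rw [Finset.sum_congr rfl hstep, ← Finset.sum_filter]
      have hset : (Finset.Icc 1 r).filter (fun j => m ≤ j ∧ j ≤ conjPart l m)
          = Finset.Icc m (conjPart l m) := by
        apply Finset.ext
        intro j
        have := conjPart_le_length l m
        simp only [Finset.mem_filter, Finset.mem_Icc]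
        omega
      rw [hset, sum_Icc_sq]
    rw [Finset.sum_congr rfl hper]
    symm
    apply Finset.sum_subset (Finset.Icc_subset_Icc_right hk)
    intro m hm hmk
    rw [Finset.mem_Icc] at hm hmk
    have h2 : ¬ m ≤ part l m := by
      intro hc
      exact absurd ((le_durfee_iff hs hm.1).mpr hc) (by omega)
    have h3 : ¬ m ≤ conjPart l m := fun hc => h2 ((conj_iff hs hm.1 hm.1).mp hc)
    rw [show conjPart l m - m = 0 by omega]
    simp
  rw [harm, hleg, ← Finset.sum_add_distrib]
  exact Finset.sum_congr rfl (fun x _ => add_comm _ _)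


theorem M3_frobenius (l : List ℕ) (hs : l.Pairwise (· ≥ ·)) (hpos : ∀ x ∈ l, 0 < x) :
    ∑ j ∈ Finset.Icc 1 l.length,
      (((part l j : ℤ) - j) * ((part l j : ℤ) - j + 1) * (2 * (part l j : ℤ) - 2 * j + 1)
        + (j : ℤ) * ((j : ℤ) - 1) * (2 * (j : ℤ) - 1)) =
    ∑ j ∈ Finset.Icc 1 (durfee l),
      (((part l j : ℤ) - j) * ((part l j : ℤ) - j + 1) * (2 * ((part l j : ℤ) - j) + 1)
        + ((conjPart l j : ℤ) - j) * ((conjPart l j : ℤ) - j + 1)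
          * (2 * ((conjPart l j : ℤ) - j) + 1)) := by
  have key := core l hs
  have hL : ∑ j ∈ Finset.Icc 1 l.length,
      (((part l j : ℤ) - j) * ((part l j : ℤ) - j + 1) * (2 * (part l j : ℤ) - 2 * j + 1)
        + (j : ℤ) * ((j : ℤ) - 1) * (2 * (j : ℤ) - 1))
      = 6 * ∑ j ∈ Finset.Icc 1 l.length, ∑ m ∈ Finset.Icc 1 (part l j), ((m:ℤ) - j)^2 := by
    rw [Finset.mul_sum]
    exact Finset.sum_congr rfl (fun j _ => lhs_term (part l j) j)
  have hR : ∑ j ∈ Finset.Icc 1 (durfee l),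
      (((part l j : ℤ) - j) * ((part l j : ℤ) - j + 1) * (2 * ((part l j : ℤ) - j) + 1)
        + ((conjPart l j : ℤ) - j) * ((conjPart l j : ℤ) - j + 1)
          * (2 * ((conjPart l j : ℤ) - j) + 1))
      = 6 * ∑ j ∈ Finset.Icc 1 (durfee l),
          ((∑ i ∈ Finset.Icc 1 (part l j - j), (i:ℤ)^2)
            + ∑ i ∈ Finset.Icc 1 (conjPart l j - j), (i:ℤ)^2) := by
    rw [Finset.mul_sum]
    apply Finset.sum_congr rfl
    intro j hj
    rw [Finset.mem_Icc] at hj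
    have hp : j ≤ part l j := (le_durfee_iff hs hj.1).mp hj.2
    have hq : j ≤ conjPart l j := (conj_iff hs hj.1 hj.1).mpr hp
    have e1 : (part l j : ℤ) - j = ((part l j - j : ℕ) : ℤ) := by
      rw [Nat.cast_sub hp]
    have e2 : (conjPart l j : ℤ) - j = ((conjPart l j - j : ℕ) : ℤ) := by
      rw [Nat.cast_sub hq]
    rw [e1, e2, sq_sum_eq, sq_sum_eq, mul_add]
  rw [hL, hR, key]
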